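/- Let V = {u₁, u₂, u₃} ⊂ ℝ² with u₁ = (1,0), u₂ = (1/√(1+ε²), ε/√(1+ε²)), u₃ = (0,1), and let f(X) = ‖Π_X (0,1)‖² on subspaces X of ℝ². Then for X = span{(1,0)} and Y = span{(1,ε)}: f(X) = 0, f(X ∩ Y) = 0, f(X + Y) = 1, and f(Y) = ε²/(1+ε²); hence f(X) + f(Y) < f(X ∩ Y) + f(X + Y) for all ε with 0 < ε < 1, so f is not submodular on the subspace lattice. -/

import Mathlib

/-- The PCA objective `f(X) = ‖Π_X (0,1)‖²` on subspaces of `ℝ²` is not submodular: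
for `X = span{(1,0)}` and `Y = span{(1,ε)}` with `0 < ε < 1`, one has `f(X) = 0`,
`f(X ⊓ Y) = 0`, `f(X ⊔ Y) = 1`, `f(Y) = ε²/(1+ε²)`, and
`f(X) + f(Y) < f(X ⊓ Y) + f(X ⊔ Y)`. -/
theorem pca_not_submodular (ε : ℝ) (hε : 0 < ε) (hε1 : ε < 1) :
    let e : (Fin 2 → ℝ) ≃ EuclideanSpace ℝ (Fin 2) := (WithLp.equiv 2 (Fin 2 → ℝ)).symm
    let v : EuclideanSpace ℝ (Fin 2) := e ![0, 1]
    let f : Submodule ℝ (EuclideanSpace ℝ (Fin 2)) → ℝ :=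
      fun W => ‖W.orthogonalProjectionOnto v‖ ^ 2
    let X : Submodule ℝ (EuclideanSpace ℝ (Fin 2)) := ℝ ∙ e ![1, 0]
    let Y : Submodule ℝ (EuclideanSpace ℝ (Fin 2)) := ℝ ∙ e ![1, ε]
    f X = 0 ∧ f (X ⊓ Y) = 0 ∧ f (X ⊔ Y) = 1 ∧ f Y = ε ^ 2 / (1 + ε ^ 2) ∧
      f X + f Y < f (X ⊓ Y) + f (X ⊔ Y) := by
  intro e v f X Y
  have hεne : ε ≠ 0 := ne_of_gt hε
  have hinner1 : (inner ℝ (e ![1, 0]) v : ℝ) = 0 := by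
    simp [e, v, PiLp.inner_apply, Fin.sum_univ_two]
  have hinner2 : (inner ℝ (e ![1, ε]) v : ℝ) = ε := by
    simp [e, v, PiLp.inner_apply, Fin.sum_univ_two]
  have hnorm2 : ‖(e ![1, ε] : EuclideanSpace ℝ (Fin 2))‖ ^ 2 = 1 + ε ^ 2 := by
    rw [EuclideanSpace.norm_eq, Real.sq_sqrt (by positivity)]
    simp [e, Fin.sum_univ_two]
  have hnormv : ‖v‖ = 1 := by
    rw [show (1:ℝ) = √1 by simp, EuclideanSpace.norm_eq]
    simp [v, e, Fin.sum_univ_two]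
  have hfX : f X = 0 := by
    have h0 : X.orthogonalProjectionOnto v = 0 :=
      Submodule.orthogonalProjectionOnto_apply_of_mem_orthogonal (by
        rw [Submodule.mem_orthogonal_singleton_iff_inner_left]
        rwa [real_inner_comm] at hinner1)
    rw [show f X = ‖X.orthogonalProjectionOnto v‖ ^ 2 from rfl, h0]; simp
  have hinf : X ⊓ Y = ⊥ := by
    rw [eq_bot_iff]
    rintro x ⟨hx, hy⟩
    simp only [X, Y, SetLike.mem_coe, Submodule.mem_span_singleton] at hx hy
    obtain ⟨a, ha⟩ := hx
    obtain ⟨b, hb⟩ := hy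
    have h1 : x 1 = 0 := by rw [← ha]; simp [e]
    have h2 : x 1 = b * ε := by rw [← hb]; simp [e]
    have hb0 : b = 0 := by
      have h3 := h1.symm.trans h2
      field_simp at h3
      exact (mul_eq_zero.mp h3.symm).resolve_right hεne
    simp [Submodule.mem_bot, ← hb, hb0]
  have hfinf : f (X ⊓ Y) = 0 := by
    rw [hinf]; simp [f]
  have hsup : X ⊔ Y = ⊤ := by
    rw [eq_top_iff]
    intro x _
    have h10 : (e ![1, 0] : EuclideanSpace ℝ (Fin 2)) ∈ X ⊔ Y :=
      Submodule.mem_sup_left (Submodule.mem_span_singleton_self _)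
    have h1ε : (e ![1, ε] : EuclideanSpace ℝ (Fin 2)) ∈ X ⊔ Y :=
      Submodule.mem_sup_right (Submodule.mem_span_singleton_self _)
    have h01 : (e ![0, 1] : EuclideanSpace ℝ (Fin 2)) ∈ X ⊔ Y := by
      have heq : (e ![0, 1] : EuclideanSpace ℝ (Fin 2)) =
          ε⁻¹ • (e ![1, ε] : EuclideanSpace ℝ (Fin 2)) - ε⁻¹ • e ![1, 0] := by
        ext i
        fin_cases i <;> simp [e] <;> field_simp
      rw [heq]
      exact sub_mem (Submodule.smul_mem _ _ h1ε) (Submodule.smul_mem _ _ h10)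
    have hx : x = x 0 • (e ![1, 0] : EuclideanSpace ℝ (Fin 2)) + x 1 • e ![0, 1] := by
      ext i
      fin_cases i <;> simp [e]
    rw [hx]
    exact add_mem (Submodule.smul_mem _ _ h10) (Submodule.smul_mem _ _ h01)
  have hfsup : f (X ⊔ Y) = 1 := by
    rw [hsup]
    have hsv : ((Submodule.orthogonalProjectionOnto (⊤ : Submodule ℝ (EuclideanSpace ℝ (Fin 2)))
        (⟨v, trivial⟩ : (⊤ : Submodule ℝ (EuclideanSpace ℝ (Fin 2)))) :
        (⊤ : Submodule ℝ (EuclideanSpace ℝ (Fin 2)))) : EuclideanSpace ℝ (Fin 2)) = v :=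
      congrArg Subtype.val (Submodule.orthogonalProjectionOnto_mem_subspace_eq_self
        (⟨v, trivial⟩ : (⊤ : Submodule ℝ (EuclideanSpace ℝ (Fin 2)))))
    simp only [f]
    have hn : ‖Submodule.orthogonalProjectionOnto (⊤ : Submodule ℝ (EuclideanSpace ℝ (Fin 2))) v‖
        = ‖((Submodule.orthogonalProjectionOnto (⊤ : Submodule ℝ (EuclideanSpace ℝ (Fin 2))) v :
          (⊤ : Submodule ℝ (EuclideanSpace ℝ (Fin 2)))) : EuclideanSpace ℝ (Fin 2))‖ := rfl
    rw [hn, hsv, hnormv, one_pow]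
  have hfY : f Y = ε ^ 2 / (1 + ε ^ 2) := by
    simp only [f, Y]
    have hn : ‖Submodule.orthogonalProjectionOnto (ℝ ∙ (e ![1, ε] : EuclideanSpace ℝ (Fin 2))) v‖
        = ‖((Submodule.orthogonalProjectionOnto (ℝ ∙ (e ![1, ε] : EuclideanSpace ℝ (Fin 2))) v :
          (ℝ ∙ (e ![1, ε] : EuclideanSpace ℝ (Fin 2)))) : EuclideanSpace ℝ (Fin 2))‖ := rfl
    rw [hn, ← Submodule.starProjection_apply, Submodule.starProjection_singleton, hinner2, norm_smul, Real.norm_eq_abs,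
      mul_pow, sq_abs, div_pow, hnorm2]
    have h1 : (1 : ℝ) + ε ^ 2 ≠ 0 := by positivity
    field_simp
    simp only [RCLike.ofReal_real_eq_id, id_eq]
  refine ⟨hfX, hfinf, hfsup, hfY, ?_⟩
  rw [hfX, hfinf, hfsup, hfY]
  rw [zero_add, zero_add, div_lt_one (by positivity)]
  nlinarith
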